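/- Suppose a sequence of differentiable functions f_n : ℝ^d → ℝ epi-converges to a function f that is locally integrable, lower bounded, and lower semicontinuous. Then for every local minimizer θ* of f there exists a sequence (θ_k) in ℝ^d with θ_k → θ* and ‖∇f_k(θ_k)‖ → 0. -/

import Mathlib

open MeasureTheory Filter InnerProductSpace


lemma sqnorm_hasFDerivAt {E : Type*} [NormedAddCommGroup E] [InnerProductSpace ℝ E]
    [CompleteSpace E] (a x : E) :
    HasFDerivAt (fun y => ‖y - a‖ ^ 2) (toDual ℝ E ((2:ℝ) • (x - a))) x := by
  have h1 : HasFDerivAt (fun y : E => y - a) (ContinuousLinearMap.id ℝ E) x :=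
    (hasFDerivAt_id x).sub_const a
  have h2 := h1.inner ℝ h1
  have heq : (fun y : E => ‖y - a‖ ^ 2) = fun y => (inner ℝ (y - a) (y - a) : ℝ) := by
    ext y; rw [real_inner_self_eq_norm_sq]
  rw [heq]
  refine h2.congr_fderiv ?_
  ext w
  simp [fderivInnerCLM_apply, toDual_apply_apply, real_inner_smul_left, real_inner_comm,
    inner_sub_left, inner_sub_right]
  ring


lemma epi_key {d : ℕ} {f : EuclideanSpace ℝ (Fin d) → ℝ}
    {fn : ℕ → EuclideanSpace ℝ (Fin d) → ℝ}
    (hcont : ∀ n, Continuous (fn n))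
    (hepi1 : ∀ (θ : EuclideanSpace ℝ (Fin d)) (θs : ℕ → EuclideanSpace ℝ (Fin d)),
      Tendsto θs atTop (nhds θ) → f θ ≤ liminf (fun n => fn n (θs n)) atTop)
    (hepi2 : ∀ θ : EuclideanSpace ℝ (Fin d), ∃ θs : ℕ → EuclideanSpace ℝ (Fin d),
      Tendsto θs atTop (nhds θ) ∧ Tendsto (fun n => fn n (θs n)) atTop (nhds (f θ)))
    {x : ℕ → EuclideanSpace ℝ (Fin d)} {φ : ℕ → ℕ} (hφ : StrictMono φ)
    {z : EuclideanSpace ℝ (Fin d)}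
    (hx : Tendsto (fun k => x (φ k)) atTop (nhds z))
    {B : ℝ} (hB : ∀ k, fn (φ k) (x (φ k)) ≤ B) : f z ≤ B := by
  by_contra hlt
  push_neg at hlt
  obtain ⟨θs, hθ1, hθ2⟩ := hepi2 z
  set c : ℝ := (B + f z) / 2 with hc
  have hBc : B < c := by rw [hc]; linarith
  have hcf : c < f z := by rw [hc]; linarith
  have hev : ∀ᶠ n in atTop, c < fn n (θs n) := hθ2.eventually (eventually_gt_nhds hcf)
  obtain ⟨N, hN⟩ := eventually_atTop.1 hev
  -- IVT points
  have ivt : ∀ k, N ≤ φ k → ∃ t : ℝ, t ∈ Set.Icc (0:ℝ) 1 ∧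
      fn (φ k) (θs (φ k) + t • (x (φ k) - θs (φ k))) = c := by
    intro k hk
    set a := θs (φ k) with ha
    set b := x (φ k) with hb
    have hGcont : Continuous (fun t : ℝ => fn (φ k) (a + t • (b - a))) :=
      (hcont _).comp (by continuity)
    have h0 : c < fn (φ k) (a + (0:ℝ) • (b - a)) := by simpa using hN _ hk
    have h1 : fn (φ k) (a + (1:ℝ) • (b - a)) ≤ B := by simpa using hB k
    have hmem : c ∈ Set.uIcc (fn (φ k) (a + (0:ℝ) • (b - a)))
        (fn (φ k) (a + (1:ℝ) • (b - a))) := by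
      rw [Set.mem_uIcc]; exact Or.inr ⟨h1.trans hBc.le, h0.le⟩
    obtain ⟨t, ht, hgt⟩ := intermediate_value_uIcc
      (a := (0:ℝ)) (b := 1) hGcont.continuousOn hmem
    exact ⟨t, by rwa [Set.uIcc_of_le zero_le_one] at ht, hgt⟩
  -- the perturbed points
  have hwex : ∀ k, ∃ w : EuclideanSpace ℝ (Fin d),
      ‖w - z‖ ≤ 2 * ‖θs (φ k) - z‖ + ‖x (φ k) - z‖ ∧ (N ≤ φ k → fn (φ k) w = c) := by
    intro k
    by_cases hk : N ≤ φ k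
    · obtain ⟨t, ht, hval⟩ := ivt k hk
      refine ⟨θs (φ k) + t • (x (φ k) - θs (φ k)), ?_, fun _ => hval⟩
      set a := θs (φ k)
      set b := x (φ k)
      have e1 : a + t • (b - a) - z = (a - z) + t • (b - a) := add_sub_right_comm a _ z
      have e2 : ‖t • (b - a)‖ ≤ ‖b - a‖ := by
        rw [norm_smul]
        have : |t| ≤ 1 := abs_le.2 ⟨by linarith [ht.1], ht.2⟩
        calc ‖t‖ * ‖b - a‖ ≤ 1 * ‖b - a‖ := by
              apply mul_le_mul_of_nonneg_right _ (norm_nonneg _)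
              simpa using this
          _ = ‖b - a‖ := one_mul _
      have e3 : ‖b - a‖ ≤ ‖b - z‖ + ‖a - z‖ := by
        calc ‖b - a‖ ≤ ‖b - z‖ + ‖z - a‖ := norm_sub_le_norm_sub_add_norm_sub b z a
          _ = ‖b - z‖ + ‖a - z‖ := by rw [norm_sub_rev z a]
      calc ‖a + t • (b - a) - z‖ = ‖(a - z) + t • (b - a)‖ := by rw [e1]
        _ ≤ ‖a - z‖ + ‖t • (b - a)‖ := norm_add_le _ _
        _ ≤ ‖a - z‖ + (‖b - z‖ + ‖a - z‖) := by linarith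
        _ = 2 * ‖a - z‖ + ‖b - z‖ := by ring
    · exact ⟨z, by simp; positivity, fun h => absurd h hk⟩
  choose w hw1 hw2 using hwex
  -- merged sequence
  classical
  set y : ℕ → EuclideanSpace ℝ (Fin d) :=
    fun n => if h : ∃ k, φ k = n then w h.choose else θs n with hy
  have hyφ : ∀ k, y (φ k) = w k := by
    intro k
    have h : ∃ k', φ k' = φ k := ⟨k, rfl⟩
    have hch : h.choose = k := hφ.injective h.choose_spec
    simp only [hy, dif_pos h, hch]
  -- w → z
  have hwz : Tendsto w atTop (nhds z) := by
    rw [tendsto_iff_norm_sub_tendsto_zero]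
    have h1 : Tendsto (fun k => ‖θs (φ k) - z‖) atTop (nhds 0) :=
      tendsto_iff_norm_sub_tendsto_zero.1 (hθ1.comp hφ.tendsto_atTop)
    have h2 : Tendsto (fun k => ‖x (φ k) - z‖) atTop (nhds 0) :=
      tendsto_iff_norm_sub_tendsto_zero.1 hx
    have hb : Tendsto (fun k => 2 * ‖θs (φ k) - z‖ + ‖x (φ k) - z‖) atTop (nhds 0) := by
      have := (h1.const_mul 2).add h2
      simpa using this
    exact squeeze_zero (fun k => norm_nonneg _) hw1 hb
  -- y → z
  have hyz : Tendsto y atTop (nhds z) := by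
    rw [Metric.tendsto_atTop]
    intro ε hε
    obtain ⟨N1, h1⟩ := Metric.tendsto_atTop.1 hθ1 ε hε
    obtain ⟨K1, h2⟩ := Metric.tendsto_atTop.1 hwz ε hε
    refine ⟨max N1 (φ K1), fun n hn => ?_⟩
    by_cases h : ∃ k, φ k = n
    · have hk := h.choose_spec
      have hK1 : K1 ≤ h.choose := by
        rw [← hφ.le_iff_le, hk]
        exact le_trans (le_max_right _ _) hn
      simp only [hy, dif_pos h]
      exact h2 _ hK1
    · simp only [hy, dif_neg h]
      exact h1 n (le_trans (le_max_left _ _) hn)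
  have hle := hepi1 z y hyz
  have hfreq : ∃ᶠ n in atTop, fn n (y n) ≤ c := by
    rw [frequently_atTop]
    intro M
    refine ⟨φ (max M N), le_trans (le_max_left M N) hφ.le_apply, ?_⟩
    rw [hyφ, hw2 _ (le_trans (le_max_right M N) hφ.le_apply)]
  have hevge : ∀ᶠ n in atTop, c ≤ fn n (y n) := by
    filter_upwards [eventually_ge_atTop N] with n hn
    by_cases h : ∃ k, φ k = n
    · have hk := h.choose_spec
      have : y n = w h.choose := by simp only [hy, dif_pos h]
      rw [this]
      have hval := hw2 h.choose (by rw [hk]; exact hn)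
      rw [hk] at hval
      exact hval.ge
    · simp only [hy, dif_neg h]
      exact (hN n hn).le
  have hbdd : IsBoundedUnder (· ≥ ·) atTop (fun n => fn n (y n)) :=
    ⟨c, eventually_map.2 hevge⟩
  have : liminf (fun n => fn n (y n)) atTop ≤ c := liminf_le_of_frequently_le hfreq hbdd
  linarith
theorem stmt16 {d : ℕ} (f : EuclideanSpace ℝ (Fin d) → ℝ)
    (fn : ℕ → EuclideanSpace ℝ (Fin d) → ℝ)
    (hdiff : ∀ n, Differentiable ℝ (fn n))
    (hloc : LocallyIntegrable f)
    (hbdd : BddBelow (Set.range f))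
    (hlsc : LowerSemicontinuous f)
    (hepi1 : ∀ (θ : EuclideanSpace ℝ (Fin d)) (θs : ℕ → EuclideanSpace ℝ (Fin d)),
      Tendsto θs atTop (nhds θ) → f θ ≤ liminf (fun n => fn n (θs n)) atTop)
    (hepi2 : ∀ θ : EuclideanSpace ℝ (Fin d), ∃ θs : ℕ → EuclideanSpace ℝ (Fin d),
      Tendsto θs atTop (nhds θ) ∧ Tendsto (fun n => fn n (θs n)) atTop (nhds (f θ)))
    (θstar : EuclideanSpace ℝ (Fin d)) (hmin : IsLocalMin f θstar) :
    ∃ θk : ℕ → EuclideanSpace ℝ (Fin d), Tendsto θk atTop (nhds θstar) ∧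
      Tendsto (fun k => ‖gradient (fn k) (θk k)‖) atTop (nhds 0) := by
  classical
  obtain ⟨ε₀, hε₀, hball⟩ := Metric.eventually_nhds_iff.1 hmin
  set r := ε₀ / 2 with hrdef
  have hr : 0 < r := by positivity
  set K : Set (EuclideanSpace ℝ (Fin d)) := Metric.closedBall θstar r with hK
  have hKmin : ∀ z ∈ K, f θstar ≤ f z := by
    intro z hz
    exact hball (lt_of_le_of_lt (Metric.mem_closedBall.1 hz) (by rw [hrdef]; linarith))
  obtain ⟨θs, hθs1, hθs2⟩ := hepi2 θstar
  -- the penalized functions and their minimizers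
  set g : ℕ → EuclideanSpace ℝ (Fin d) → ℝ := fun n x => fn n x + ‖x - θs n‖ ^ 2 with hg
  have hgdiff : ∀ n, Differentiable ℝ (g n) := by
    intro n
    apply (hdiff n).add
    intro x
    exact ((sqnorm_hasFDerivAt (θs n) x).differentiableAt)
  have hminex : ∀ n, ∃ x ∈ K, IsMinOn (g n) K x := fun n =>
    (isCompact_closedBall θstar r).exists_isMinOn
      ⟨θstar, Metric.mem_closedBall_self hr.le⟩ (hgdiff n).continuous.continuousOn
  choose x hxK hxmin using hminex
  -- eventual facts
  have hθsK : ∀ᶠ n in atTop, θs n ∈ K := by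
    have : K ∈ nhds θstar := Metric.closedBall_mem_nhds θstar hr
    exact (hθs1.eventually (eventually_mem_nhds_iff.2 this)).mono fun n h => mem_of_mem_nhds h
  -- distance to penalty center tends to zero
  have hdist : Tendsto (fun n => ‖x n - θs n‖) atTop (nhds 0) := by
    rw [NormedAddCommGroup.tendsto_nhds_zero]
    intro ε hε
    by_contra hcon
    rw [not_eventually] at hcon
    have hcon' : ∃ᶠ n in atTop, ε ≤ ‖x n - θs n‖ := by
      refine hcon.mono fun n hn => ?_
      rw [norm_norm] at hn
      exact not_lt.1 hn
    have hval : ∀ᶠ n in atTop, fn n (θs n) < f θstar + ε ^ 2 / 4 :=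
      hθs2.eventually (eventually_lt_nhds (by nlinarith))
    have hfreq : ∃ᶠ n in atTop,
        (ε ≤ ‖x n - θs n‖ ∧ θs n ∈ K ∧ fn n (θs n) < f θstar + ε ^ 2 / 4) :=
      hcon'.and_eventually (hθsK.and hval)
    obtain ⟨φ, hφ, hφprop⟩ := extraction_of_frequently_atTop hfreq
    obtain ⟨z, hzK, ψ, hψ, hxz⟩ :=
      (isCompact_closedBall θstar r).tendsto_subseq (fun k => hxK (φ k))
    have hB : ∀ k, fn (φ (ψ k)) (x (φ (ψ k))) ≤ f θstar - ε ^ 2 / 2 := by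
      intro k
      obtain ⟨h1, h2, h3⟩ := hφprop (ψ k)
      have hmin' := isMinOn_iff.1 (hxmin (φ (ψ k))) (θs (φ (ψ k))) h2
      rw [hg] at hmin'
      simp only [sub_self, norm_zero] at hmin'
      -- hmin' : fn _ (x _) + ‖x _ - θs _‖^2 ≤ fn _ (θs _) + 0^2
      have hsq : ε ^ 2 ≤ ‖x (φ (ψ k)) - θs (φ (ψ k))‖ ^ 2 := by
        apply sq_le_sq' <;> nlinarith [norm_nonneg (x (φ (ψ k)) - θs (φ (ψ k)))]
      nlinarith
    have hfz := epi_key (fun n => (hdiff n).continuous) hepi1 hepi2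
      (hφ.comp hψ) hxz hB
    have := hKmin z hzK
    nlinarith
  -- x tends to θstar
  have hxθ : Tendsto x atTop (nhds θstar) := by
    rw [tendsto_iff_dist_tendsto_zero]
    refine squeeze_zero (fun n => dist_nonneg) (fun n => dist_triangle (x n) (θs n) θstar) ?_
    have h2 : Tendsto (fun n => dist (θs n) θstar) atTop (nhds 0) :=
      tendsto_iff_dist_tendsto_zero.1 hθs1
    have h1 : Tendsto (fun n => dist (x n) (θs n)) atTop (nhds 0) := by
      simpa [dist_eq_norm] using hdist
    simpa using h1.add h2
  -- eventually interior
  have hint : ∀ᶠ n in atTop, x n ∈ Metric.ball θstar r := by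
    have : Metric.ball θstar r ∈ nhds θstar := Metric.ball_mem_nhds θstar hr
    exact (hxθ.eventually (eventually_mem_nhds_iff.2 this)).mono fun n h => mem_of_mem_nhds h
  -- gradient formula
  have hgrad : ∀ᶠ n in atTop, ‖gradient (fn n) (x n)‖ = 2 * ‖x n - θs n‖ := by
    filter_upwards [hint] with n hn
    have hlocmin : IsLocalMin (g n) (x n) :=
      (hxmin n).isLocalMin (Metric.closedBall_mem_nhds_of_mem hn)
    have hf0 : fderiv ℝ (g n) (x n) = 0 := hlocmin.fderiv_eq_zero
    have hq := sqnorm_hasFDerivAt (θs n) (x n)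
    have hgn : HasFDerivAt (g n)
        (fderiv ℝ (fn n) (x n) + toDual ℝ _ ((2:ℝ) • (x n - θs n))) (x n) :=
      ((hdiff n).differentiableAt.hasFDerivAt).add hq
    have heq : fderiv ℝ (fn n) (x n) = -(toDual ℝ _ ((2:ℝ) • (x n - θs n))) := by
      have h1 := hgn.fderiv
      rw [hf0] at h1
      exact eq_neg_of_add_eq_zero_left h1.symm
    rw [gradient, heq, map_neg, LinearIsometryEquiv.symm_apply_apply, norm_neg, norm_smul]
    simp
  refine ⟨x, hxθ, ?_⟩
  have hlim : Tendsto (fun n => 2 * ‖x n - θs n‖) atTop (nhds 0) := by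
    simpa using hdist.const_mul 2
  exact hlim.congr' (by filter_upwards [hgrad] with n h using h.symm)
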